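/- Let Z1,…,Zk be discrete random variables, and for 1 ≤ i < j ≤ k let Z_(i,j) denote the tuple (Z_t : i < t < j). Then for k ≥ 2: (k−1)·H(Z1,…,Zk) ≤ ∑_{1≤i<j≤k} H(Z_i, Z_j | Z_(i,j)). -/

import Mathlib

open Finset

/-- Shannon entropy of a discrete random variable `X` on a finite probability
space with probability mass function `p`. -/
noncomputable def ent {Ω S : Type*} [Fintype Ω] (p : Ω → ℝ) (X : Ω → S) : ℝ :=
  letI := Classical.decEq S
  ∑ y ∈ Finset.univ.image X,
    Real.negMulLog (∑ ω ∈ Finset.univ.filter (fun ω => X ω = y), p ω)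

/-- Conditional Shannon entropy `H(X | Y)`. -/
noncomputable def condEnt {Ω S T : Type*} [Fintype Ω] (p : Ω → ℝ)
    (X : Ω → S) (Y : Ω → T) : ℝ :=
  ent p (fun ω => (X ω, Y ω)) - ent p Y

/-- Mutual information `I(X ; Y)`. -/
noncomputable def mutInf {Ω S T : Type*} [Fintype Ω] (p : Ω → ℝ)
    (X : Ω → S) (Y : Ω → T) : ℝ :=
  ent p X + ent p Y - ent p (fun ω => (X ω, Y ω))

/-- `p` is a probability mass function. -/
def IsProbMass {Ω : Type*} [Fintype Ω] (p : Ω → ℝ) : Prop :=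
  (∀ ω, 0 ≤ p ω) ∧ ∑ ω, p ω = 1

/-- The random variables `Z i` are mutually independent. -/
def IndepRVs {Ω G : Type*} [Fintype Ω] {n : ℕ} (p : Ω → ℝ) (Z : Fin n → Ω → G) : Prop :=
  letI := Classical.decEq G
  ∀ z : Fin n → G,
    (∑ ω ∈ Finset.univ.filter (fun ω => ∀ i, Z i ω = z i), p ω)
      = ∏ i, ∑ ω ∈ Finset.univ.filter (fun ω => Z i ω = z i), p ω

set_option linter.unusedSectionVars false
set_option maxHeartbeats 1000000

section AuxEntropy

open scoped Classical in
noncomputable def pr {Ω S : Type*} [Fintype Ω] (p : Ω → ℝ) (X : Ω → S) (s : S) : ℝ :=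
  ∑ ω ∈ Finset.univ.filter (fun ω => X ω = s), p ω

variable {Ω S T U : Type*} [Fintype Ω] {p : Ω → ℝ}

open scoped Classical

lemma pr_nonneg (hp0 : ∀ ω, 0 ≤ p ω) (X : Ω → S) (s : S) : 0 ≤ pr p X s :=
  Finset.sum_nonneg fun ω _ => hp0 ω

lemma le_pr (hp0 : ∀ ω, 0 ≤ p ω) (X : Ω → S) (ω : Ω) : p ω ≤ pr p X (X ω) :=
  Finset.single_le_sum (fun ω _ => hp0 ω) (by simp)

lemma pr_le_pr (hp0 : ∀ ω, 0 ≤ p ω) (X : Ω → S) (Y : Ω → T) (f : S → T)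
    (hf : ∀ ω, Y ω = f (X ω)) (s : S) : pr p X s ≤ pr p Y (f s) := by
  apply Finset.sum_le_sum_of_subset_of_nonneg
  · intro ω hω
    simp only [Finset.mem_filter, Finset.mem_univ, true_and] at hω ⊢
    rw [hf, hω]
  · exact fun ω _ _ => hp0 ω


lemma pr_eq_sum_ite (X : Ω → S) (s : S) :
    pr p X s = ∑ ω, if X ω = s then p ω else 0 := by
  rw [pr, Finset.sum_filter]

lemma sum_pr_le (hp0 : ∀ ω, 0 ≤ p ω) (X : Ω → S) (T' : Finset S) :
    ∑ s ∈ T', pr p X s ≤ ∑ ω, p ω := by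
  simp only [pr_eq_sum_ite]
  rw [Finset.sum_comm]
  refine Finset.sum_le_sum fun ω _ => ?_
  have : ∑ s ∈ T', (if X ω = s then p ω else 0) = if X ω ∈ T' then p ω else 0 := by
    rw [Finset.sum_ite_eq T' (X ω) (fun _ => p ω)]
  rw [this]
  split <;> simp [hp0 ω]

lemma sum_pr_pair_le (hp0 : ∀ ω, 0 ≤ p ω) (A : Ω → S) (C : Ω → U) (T' : Finset S) (z : U) :
    ∑ x ∈ T', pr p (fun ω => (A ω, C ω)) (x, z) ≤ pr p C z := by
  simp only [pr_eq_sum_ite, Prod.mk.injEq]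
  rw [Finset.sum_comm]
  refine Finset.sum_le_sum fun ω _ => ?_
  by_cases hc : C ω = z
  · simp only [hc, and_true]
    have : ∑ x ∈ T', (if A ω = x then p ω else 0) = if A ω ∈ T' then p ω else 0 :=
      Finset.sum_ite_eq T' (A ω) (fun _ => p ω)
    rw [this]
    split <;> simp [hp0 ω]
  · simp [hc]

lemma sum_comp_pr [DecidableEq S] (X : Ω → S) (F : S → ℝ) :
    ∑ ω, p ω * F (X ω) = ∑ s ∈ Finset.univ.image X, pr p X s * F s := by
  classical
  rw [← Finset.sum_fiberwise_of_maps_to (fun ω _ => Finset.mem_image_of_mem X (mem_univ ω))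
    (fun ω => p ω * F (X ω))]
  refine Finset.sum_congr rfl fun s _ => ?_
  rw [pr, Finset.sum_mul]
  refine Finset.sum_congr (Finset.filter_congr_decidable ..).symm fun ω hω => ?_
  simp only [Finset.mem_filter] at hω
  rw [hω.2]


lemma ent_eq (p : Ω → ℝ) (X : Ω → S) :
    ent p X = ∑ ω, p ω * (- Real.log (pr p X (X ω))) := by
  rw [sum_comp_pr X (fun s => - Real.log (pr p X s))]
  rw [ent]
  refine Finset.sum_congr rfl fun s _ => ?_
  rw [Real.negMulLog, pr]
  ring_nf

lemma pr_congr_fiber {X : Ω → S} {Y : Ω → T}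
    (h : ∀ ω ω', X ω = X ω' ↔ Y ω = Y ω') (ω : Ω) :
    pr p X (X ω) = pr p Y (Y ω) := by
  unfold pr
  apply Finset.sum_congr _ (fun _ _ => rfl)
  ext ω'
  simp only [Finset.mem_filter, Finset.mem_univ, true_and]
  constructor
  · intro hx; exact ((h ω' ω).1 hx)
  · intro hy; exact ((h ω' ω).2 hy)

lemma ent_congr {X : Ω → S} {Y : Ω → T}
    (h : ∀ ω ω', X ω = X ω' ↔ Y ω = Y ω') : ent p X = ent p Y := by
  rw [ent_eq, ent_eq]
  refine Finset.sum_congr rfl fun ω _ => ?_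
  rw [pr_congr_fiber h]

lemma counting [DecidableEq S] [DecidableEq T] [DecidableEq U]
    (hp : IsProbMass p) (A : Ω → S) (B : Ω → T) (C : Ω → U) :
    ∑ ω, p ω * (pr p (fun ω => (A ω, C ω)) (A ω, C ω) * pr p (fun ω => (B ω, C ω)) (B ω, C ω)
      / (pr p (fun ω => (A ω, B ω, C ω)) (A ω, B ω, C ω) * pr p C (C ω))) ≤ 1 := by
  obtain ⟨hp0, hp1⟩ := hp
  have h1 : ∑ ω, p ω * (pr p (fun ω => (A ω, C ω)) (A ω, C ω) * pr p (fun ω => (B ω, C ω)) (B ω, C ω)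
      / (pr p (fun ω => (A ω, B ω, C ω)) (A ω, B ω, C ω) * pr p C (C ω)))
      = ∑ v ∈ Finset.univ.image (fun ω => (A ω, B ω, C ω)), pr p (fun ω => (A ω, B ω, C ω)) v *
        (pr p (fun ω => (A ω, C ω)) (v.1, v.2.2) * pr p (fun ω => (B ω, C ω)) (v.2.1, v.2.2)
          / (pr p (fun ω => (A ω, B ω, C ω)) v * pr p C v.2.2)) :=
    sum_comp_pr (p := p) (fun ω => (A ω, B ω, C ω)) (fun v =>
      pr p (fun ω => (A ω, C ω)) (v.1, v.2.2) * pr p (fun ω => (B ω, C ω)) (v.2.1, v.2.2)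
        / (pr p (fun ω => (A ω, B ω, C ω)) v * pr p C v.2.2))
  rw [h1]
  have h2 : ∀ v ∈ Finset.univ.image (fun ω => (A ω, B ω, C ω)),
      pr p (fun ω => (A ω, B ω, C ω)) v *
        (pr p (fun ω => (A ω, C ω)) (v.1, v.2.2) * pr p (fun ω => (B ω, C ω)) (v.2.1, v.2.2)
          / (pr p (fun ω => (A ω, B ω, C ω)) v * pr p C v.2.2))
      ≤ pr p (fun ω => (A ω, C ω)) (v.1, v.2.2) * pr p (fun ω => (B ω, C ω)) (v.2.1, v.2.2)
          / pr p C v.2.2 := by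
    intro v _
    rcases eq_or_lt_of_le (pr_nonneg hp0 (fun ω => (A ω, B ω, C ω)) v) with h | h
    · rw [← h, zero_mul]
      have := pr_nonneg hp0 (fun ω => (A ω, C ω)) (v.1, v.2.2)
      have := pr_nonneg hp0 (fun ω => (B ω, C ω)) (v.2.1, v.2.2)
      have := pr_nonneg hp0 C v.2.2
      positivity
    · have hd : 0 < pr p C v.2.2 :=
        lt_of_lt_of_le h (pr_le_pr hp0 (fun ω => (A ω, B ω, C ω)) C (fun v => v.2.2) (fun _ => rfl) v)
      have : pr p (fun ω => (A ω, B ω, C ω)) v *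
          (pr p (fun ω => (A ω, C ω)) (v.1, v.2.2) * pr p (fun ω => (B ω, C ω)) (v.2.1, v.2.2)
            / (pr p (fun ω => (A ω, B ω, C ω)) v * pr p C v.2.2))
          = pr p (fun ω => (A ω, C ω)) (v.1, v.2.2) * pr p (fun ω => (B ω, C ω)) (v.2.1, v.2.2)
            / pr p C v.2.2 := by
        field_simp
      rw [this]
  refine le_trans (Finset.sum_le_sum h2) ?_
  have h3 : ∀ z ∈ Finset.univ.image C,
      (∑ v ∈ (Finset.univ.image (fun ω => (A ω, B ω, C ω))).filter (fun v => v.2.2 = z),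
        pr p (fun ω => (A ω, C ω)) (v.1, v.2.2) * pr p (fun ω => (B ω, C ω)) (v.2.1, v.2.2)
          / pr p C v.2.2) ≤ pr p C z := by
    intro z _
    set Vz := (Finset.univ.image (fun ω => (A ω, B ω, C ω))).filter (fun v => v.2.2 = z) with hVz
    have e1 : ∀ v ∈ Vz,
        pr p (fun ω => (A ω, C ω)) (v.1, v.2.2) * pr p (fun ω => (B ω, C ω)) (v.2.1, v.2.2)
          / pr p C v.2.2
        = pr p (fun ω => (A ω, C ω)) (v.1, z) * pr p (fun ω => (B ω, C ω)) (v.2.1, z)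
          / pr p C z := by
      intro v hv
      rw [hVz, Finset.mem_filter] at hv
      rw [hv.2]
    rw [Finset.sum_congr rfl e1, ← Finset.sum_div]
    have hN : (∑ v ∈ Vz, pr p (fun ω => (A ω, C ω)) (v.1, z) * pr p (fun ω => (B ω, C ω)) (v.2.1, z))
        ≤ pr p C z * pr p C z := by
      have hinj : ∀ x ∈ Vz, ∀ y ∈ Vz,
          (fun v : S × T × U => (v.1, v.2.1)) x = (fun v : S × T × U => (v.1, v.2.1)) y → x = y := by
        intro x hx y hy hxy
        rw [hVz, Finset.mem_filter] at hx hy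
        have h1 := congrArg Prod.fst hxy
        have h2 := congrArg Prod.snd hxy
        simp only at h1 h2
        have : x.2.2 = y.2.2 := by rw [hx.2, hy.2]
        exact Prod.ext h1 (Prod.ext h2 this)
      rw [← Finset.sum_image (f := fun w : S × T =>
        pr p (fun ω => (A ω, C ω)) (w.1, z) * pr p (fun ω => (B ω, C ω)) (w.2, z)) hinj]
      have hsub : Vz.image (fun v : S × T × U => (v.1, v.2.1))
          ⊆ (Vz.image (fun v => v.1)) ×ˢ (Vz.image (fun v => v.2.1)) := by
        intro w hw
        simp only [Finset.mem_image, Finset.mem_product] at hw ⊢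
        obtain ⟨v, hv, rfl⟩ := hw
        exact ⟨⟨v, hv, rfl⟩, ⟨v, hv, rfl⟩⟩
      refine le_trans (Finset.sum_le_sum_of_subset_of_nonneg hsub ?_) ?_
      · intro w _ _
        exact mul_nonneg (pr_nonneg hp0 _ _) (pr_nonneg hp0 _ _)
      · rw [Finset.sum_product]
        dsimp only
        rw [← Finset.sum_mul_sum]
        exact mul_le_mul (sum_pr_pair_le hp0 A C _ z) (sum_pr_pair_le hp0 B C _ z)
          (Finset.sum_nonneg fun y _ => pr_nonneg hp0 _ _) (pr_nonneg hp0 C z)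
    rcases eq_or_lt_of_le (pr_nonneg hp0 C z) with h | h
    · rw [← h] at hN ⊢
      rw [mul_zero] at hN
      have h0 : (∑ v ∈ Vz, pr p (fun ω => (A ω, C ω)) (v.1, z) * pr p (fun ω => (B ω, C ω)) (v.2.1, z)) = 0 :=
        le_antisymm hN (Finset.sum_nonneg fun v _ => mul_nonneg (pr_nonneg hp0 _ _) (pr_nonneg hp0 _ _))
      rw [h0, zero_div]
    · exact (div_le_iff₀ h).mpr hN
  calc ∑ v ∈ Finset.univ.image (fun ω => (A ω, B ω, C ω)),
        pr p (fun ω => (A ω, C ω)) (v.1, v.2.2) * pr p (fun ω => (B ω, C ω)) (v.2.1, v.2.2)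
          / pr p C v.2.2
      = ∑ z ∈ Finset.univ.image C,
          ∑ v ∈ (Finset.univ.image (fun ω => (A ω, B ω, C ω))).filter (fun v => v.2.2 = z),
            pr p (fun ω => (A ω, C ω)) (v.1, v.2.2) * pr p (fun ω => (B ω, C ω)) (v.2.1, v.2.2)
              / pr p C v.2.2 := by
        rw [Finset.sum_fiberwise_of_maps_to]
        intro v hv
        simp only [Finset.mem_image] at hv ⊢
        obtain ⟨ω, _, rfl⟩ := hv
        exact ⟨ω, mem_univ ω, rfl⟩
    _ ≤ ∑ z ∈ Finset.univ.image C, pr p C z := Finset.sum_le_sum h3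
    _ ≤ ∑ ω, p ω := sum_pr_le hp0 C _
    _ = 1 := hp1

lemma submodular [DecidableEq S] [DecidableEq T] [DecidableEq U]
    (hp : IsProbMass p) (A : Ω → S) (B : Ω → T) (C : Ω → U) :
    ent p (fun ω => (A ω, B ω, C ω)) + ent p C
      ≤ ent p (fun ω => (A ω, C ω)) + ent p (fun ω => (B ω, C ω)) := by
  have hp0 := hp.1
  have hp1 := hp.2
  rw [ent_eq, ent_eq, ent_eq, ent_eq, ← Finset.sum_add_distrib, ← Finset.sum_add_distrib]
  have main : ∀ ω : Ω,
      p ω * (-Real.log (pr p (fun ω => (A ω, B ω, C ω)) (A ω, B ω, C ω)))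
        + p ω * (-Real.log (pr p C (C ω)))
      ≤ p ω * (-Real.log (pr p (fun ω => (A ω, C ω)) (A ω, C ω)))
        + p ω * (-Real.log (pr p (fun ω => (B ω, C ω)) (B ω, C ω)))
        + (p ω * (pr p (fun ω => (A ω, C ω)) (A ω, C ω) * pr p (fun ω => (B ω, C ω)) (B ω, C ω)
            / (pr p (fun ω => (A ω, B ω, C ω)) (A ω, B ω, C ω) * pr p C (C ω))) - p ω) := by
    intro ω
    set a := pr p (fun ω => (A ω, B ω, C ω)) (A ω, B ω, C ω) with hadef
    set b := pr p (fun ω => (A ω, C ω)) (A ω, C ω) with hbdef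
    set c := pr p (fun ω => (B ω, C ω)) (B ω, C ω) with hcdef
    set d := pr p C (C ω) with hddef
    rcases eq_or_lt_of_le (hp0 ω) with h0 | h0
    · rw [← h0]; simp
    · have ha : 0 < a := lt_of_lt_of_le h0 (le_pr hp0 (fun ω => (A ω, B ω, C ω)) ω)
      have hab : a ≤ b := pr_le_pr hp0 (fun ω => (A ω, B ω, C ω)) (fun ω => (A ω, C ω))
        (fun v => (v.1, v.2.2)) (fun _ => rfl) (A ω, B ω, C ω)
      have hac : a ≤ c := pr_le_pr hp0 (fun ω => (A ω, B ω, C ω)) (fun ω => (B ω, C ω))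
        (fun v => (v.2.1, v.2.2)) (fun _ => rfl) (A ω, B ω, C ω)
      have hbd : b ≤ d := pr_le_pr hp0 (fun ω => (A ω, C ω)) C Prod.snd (fun _ => rfl) (A ω, C ω)
      have hb : 0 < b := lt_of_lt_of_le ha hab
      have hc : 0 < c := lt_of_lt_of_le ha hac
      have hd : 0 < d := lt_of_lt_of_le hb hbd
      have hlog : Real.log (b * c / (a * d)) ≤ b * c / (a * d) - 1 :=
        Real.log_le_sub_one_of_pos (by positivity)
      rw [Real.log_div (by positivity) (by positivity), Real.log_mul (ne_of_gt hb) (ne_of_gt hc),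
        Real.log_mul (ne_of_gt ha) (ne_of_gt hd)] at hlog
      have hmul := mul_le_mul_of_nonneg_left hlog (hp0 ω)
      nlinarith [hmul]
  calc ∑ ω, (p ω * (-Real.log (pr p (fun ω => (A ω, B ω, C ω)) (A ω, B ω, C ω)))
        + p ω * (-Real.log (pr p C (C ω))))
      ≤ ∑ ω, (p ω * (-Real.log (pr p (fun ω => (A ω, C ω)) (A ω, C ω)))
        + p ω * (-Real.log (pr p (fun ω => (B ω, C ω)) (B ω, C ω)))
        + (p ω * (pr p (fun ω => (A ω, C ω)) (A ω, C ω) * pr p (fun ω => (B ω, C ω)) (B ω, C ω)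
            / (pr p (fun ω => (A ω, B ω, C ω)) (A ω, B ω, C ω) * pr p C (C ω))) - p ω)) :=
        Finset.sum_le_sum fun ω _ => main ω
    _ = (∑ ω, (p ω * (-Real.log (pr p (fun ω => (A ω, C ω)) (A ω, C ω)))
        + p ω * (-Real.log (pr p (fun ω => (B ω, C ω)) (B ω, C ω)))))
        + ((∑ ω, p ω * (pr p (fun ω => (A ω, C ω)) (A ω, C ω) * pr p (fun ω => (B ω, C ω)) (B ω, C ω)
            / (pr p (fun ω => (A ω, B ω, C ω)) (A ω, B ω, C ω) * pr p C (C ω)))) - ∑ ω, p ω) := by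
        rw [Finset.sum_add_distrib, Finset.sum_sub_distrib]
    _ ≤ ∑ ω, (p ω * (-Real.log (pr p (fun ω => (A ω, C ω)) (A ω, C ω)))
        + p ω * (-Real.log (pr p (fun ω => (B ω, C ω)) (B ω, C ω)))) := by
        have := counting hp A B C
        rw [hp1]
        linarith [this]

lemma ent_mono_pair (hp0 : ∀ ω, 0 ≤ p ω) (B : Ω → T) (C : Ω → U) :
    ent p C ≤ ent p (fun ω => (B ω, C ω)) := by
  rw [ent_eq, ent_eq]
  refine Finset.sum_le_sum fun ω _ => ?_
  rcases eq_or_lt_of_le (hp0 ω) with h0 | h0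
  · rw [← h0]; simp
  · have hb : 0 < pr p (fun ω => (B ω, C ω)) (B ω, C ω) :=
      lt_of_lt_of_le h0 (le_pr hp0 (fun ω => (B ω, C ω)) ω)
    have hbd : pr p (fun ω => (B ω, C ω)) (B ω, C ω) ≤ pr p C (C ω) :=
      pr_le_pr hp0 (fun ω => (B ω, C ω)) C Prod.snd (fun _ => rfl) (B ω, C ω)
    have := Real.log_le_log hb hbd
    have := hp0 ω
    nlinarith

end AuxEntropy

section
variable {Ω S : Type*} [Fintype Ω] {k : ℕ} {p : Ω → ℝ}

lemma ent_const (hp : IsProbMass p) {S : Type*} (c : S) : ent p (fun _ => c) = 0 := by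
  classical
  have hne : (Finset.univ : Finset Ω).Nonempty := by
    by_contra h
    rw [Finset.not_nonempty_iff_eq_empty] at h
    have := hp.2
    rw [h] at this
    simp at this
  rw [ent]
  rw [Finset.image_const hne]
  rw [Finset.sum_singleton]
  have : (Finset.univ.filter (fun _ : Ω => c = c)) = Finset.univ := by simp
  rw [this, hp.2, Real.negMulLog_one]

/-- `Z` extended to `ℕ` with junk values. -/
def Zo (Z : Fin k → Ω → S) (n : ℕ) (ω : Ω) : Option S :=
  if h : n < k then some (Z ⟨n, h⟩ ω) else none

/-- The joint random variable of the variables with indices in `A`. -/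
def JJ (Z : Fin k → Ω → S) (A : Finset ℕ) : Ω → (ℕ → Option (Option S)) :=
  fun ω n => if n ∈ A then some (Zo Z n ω) else none

noncomputable def hA (p : Ω → ℝ) (Z : Fin k → Ω → S) (A : Finset ℕ) : ℝ := ent p (JJ Z A)

lemma JJ_eq_iff (Z : Fin k → Ω → S) (A : Finset ℕ) (ω ω' : Ω) :
    JJ Z A ω = JJ Z A ω' ↔ ∀ n ∈ A, Zo Z n ω = Zo Z n ω' := by
  constructor
  · intro h n hn
    have := congrFun h n
    simp only [JJ, if_pos hn, Option.some.injEq] at this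
    exact this
  · intro h
    funext n
    by_cases hn : n ∈ A
    · simp only [JJ, if_pos hn, h n hn]
    · simp only [JJ, if_neg hn]

lemma hA_submod (hp : IsProbMass p) (Z : Fin k → Ω → S) (A B : Finset ℕ) :
    hA p Z (A ∪ B) + hA p Z (A ∩ B) ≤ hA p Z A + hA p Z B := by
  classical
  have hsub := submodular hp (JJ Z (A \ B)) (JJ Z (B \ A)) (JJ Z (A ∩ B))
  have e1 : ent p (fun ω => (JJ Z (A \ B) ω, JJ Z (B \ A) ω, JJ Z (A ∩ B) ω))
      = hA p Z (A ∪ B) := by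
    refine ent_congr fun ω ω' => ?_
    simp only [Prod.mk.injEq, JJ_eq_iff]
    constructor
    · rintro ⟨h1, h2, h3⟩ n hn
      rcases Finset.mem_union.mp hn with hn | hn
      · by_cases hb : n ∈ B
        · exact h3 n (Finset.mem_inter.mpr ⟨hn, hb⟩)
        · exact h1 n (Finset.mem_sdiff.mpr ⟨hn, hb⟩)
      · by_cases ha : n ∈ A
        · exact h3 n (Finset.mem_inter.mpr ⟨ha, hn⟩)
        · exact h2 n (Finset.mem_sdiff.mpr ⟨hn, ha⟩)
    · intro h
      refine ⟨fun n hn => ?_, fun n hn => ?_, fun n hn => ?_⟩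
      · exact h n (Finset.mem_union.mpr (Or.inl (Finset.mem_sdiff.mp hn).1))
      · exact h n (Finset.mem_union.mpr (Or.inr (Finset.mem_sdiff.mp hn).1))
      · exact h n (Finset.mem_union.mpr (Or.inl (Finset.mem_inter.mp hn).1))
  have e2 : ent p (fun ω => (JJ Z (A \ B) ω, JJ Z (A ∩ B) ω)) = hA p Z A := by
    refine ent_congr fun ω ω' => ?_
    simp only [Prod.mk.injEq, JJ_eq_iff]
    constructor
    · rintro ⟨h1, h3⟩ n hn
      by_cases hb : n ∈ B
      · exact h3 n (Finset.mem_inter.mpr ⟨hn, hb⟩)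
      · exact h1 n (Finset.mem_sdiff.mpr ⟨hn, hb⟩)
    · intro h
      exact ⟨fun n hn => h n (Finset.mem_sdiff.mp hn).1, fun n hn => h n (Finset.mem_inter.mp hn).1⟩
  have e3 : ent p (fun ω => (JJ Z (B \ A) ω, JJ Z (A ∩ B) ω)) = hA p Z B := by
    refine ent_congr fun ω ω' => ?_
    simp only [Prod.mk.injEq, JJ_eq_iff]
    constructor
    · rintro ⟨h1, h3⟩ n hn
      by_cases ha : n ∈ A
      · exact h3 n (Finset.mem_inter.mpr ⟨ha, hn⟩)
      · exact h1 n (Finset.mem_sdiff.mpr ⟨hn, ha⟩)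
    · intro h
      exact ⟨fun n hn => h n (Finset.mem_sdiff.mp hn).1, fun n hn => h n (Finset.mem_inter.mp hn).2⟩
  rw [e1, e2, e3] at hsub
  exact hsub

lemma JJ_empty (Z : Fin k → Ω → S) : JJ Z ∅ = fun _ => fun _ => none := by
  funext ω n
  simp [JJ]

lemma hA_empty (hp : IsProbMass p) (Z : Fin k → Ω → S) : hA p Z ∅ = 0 := by
  rw [hA, JJ_empty]
  exact ent_const hp _

lemma key (hp : IsProbMass p) (Z : Fin k → Ω → S) (m : ℕ) :
    (m : ℝ) * hA p Z (Finset.Icc 0 m)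
      ≤ ∑ b ∈ Finset.range (m+1), ∑ a ∈ Finset.range b,
          (hA p Z (Finset.Icc a b) - hA p Z (Finset.Ioo a b)) := by
  induction m with
  | zero => simp
  | succ m ih =>
    rw [Finset.sum_range_succ]
    have step : ∀ a ∈ Finset.range (m+1),
        (hA p Z (Finset.Icc 0 (m+1)) - hA p Z (Finset.Icc 0 m))
          + (hA p Z (Finset.Icc a m) - hA p Z (Finset.Icc (a+1) m))
        ≤ hA p Z (Finset.Icc a (m+1)) - hA p Z (Finset.Ioo a (m+1)) := by
      intro a ha
      rw [Finset.mem_range] at ha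
      have hIoo : Finset.Ioo a (m+1) = Finset.Icc (a+1) m := by
        ext n; simp only [Finset.mem_Ioo, Finset.mem_Icc]; omega
      have hsub := hA_submod hp Z (Finset.Icc a (m+1)) (Finset.Icc 0 m)
      have hu : Finset.Icc a (m+1) ∪ Finset.Icc 0 m = Finset.Icc 0 (m+1) := by
        ext n; simp only [Finset.mem_union, Finset.mem_Icc]; omega
      have hi : Finset.Icc a (m+1) ∩ Finset.Icc 0 m = Finset.Icc a m := by
        ext n; simp only [Finset.mem_inter, Finset.mem_Icc]; omega
      rw [hu, hi] at hsub
      rw [hIoo]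
      linarith
    have tele : ∑ a ∈ Finset.range (m+1),
        (hA p Z (Finset.Icc a m) - hA p Z (Finset.Icc (a+1) m))
        = hA p Z (Finset.Icc 0 m) - hA p Z (Finset.Icc (m+1) m) :=
      Finset.sum_range_sub' (fun a => hA p Z (Finset.Icc a m)) (m+1)
    have hempty : hA p Z (Finset.Icc (m+1) m) = 0 := by
      rw [Finset.Icc_eq_empty (by omega)]
      exact hA_empty hp Z
    have hsum : ((m:ℝ)+1) * (hA p Z (Finset.Icc 0 (m+1)) - hA p Z (Finset.Icc 0 m))
        + hA p Z (Finset.Icc 0 m)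
        ≤ ∑ a ∈ Finset.range (m+1),
            (hA p Z (Finset.Icc a (m+1)) - hA p Z (Finset.Ioo a (m+1))) := by
      refine le_trans (le_of_eq ?_) (Finset.sum_le_sum step)
      rw [Finset.sum_add_distrib, tele, hempty, Finset.sum_const, Finset.card_range,
        nsmul_eq_mul]
      push_cast
      ring
    push_cast
    linarith
end

section
variable {Ω S : Type*} [Fintype Ω] {k : ℕ} {p : Ω → ℝ}
set_option linter.unusedSectionVars false

lemma Zo_eq_iff (Z : Fin k → Ω → S) (n : ℕ) (hnk : n < k) (ω ω' : Ω) :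
    Zo Z n ω = Zo Z n ω' ↔ Z ⟨n, hnk⟩ ω = Z ⟨n, hnk⟩ ω' := by
  simp [Zo, dif_pos hnk]

lemma hA_full (hk1 : 1 ≤ k) (Z : Fin k → Ω → S) :
    ent p (fun ω => fun i => Z i ω) = hA p Z (Finset.Icc 0 (k-1)) := by
  refine ent_congr fun ω ω' => ?_
  rw [JJ_eq_iff]
  constructor
  · intro h n hn
    rw [Finset.mem_Icc] at hn
    have hnk : n < k := by omega
    rw [Zo_eq_iff Z n hnk]
    exact congrFun h ⟨n, hnk⟩
  · intro h
    funext i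
    have := h i.val (by rw [Finset.mem_Icc]; omega)
    rw [Zo_eq_iff Z i.val i.isLt] at this
    simpa using this

lemma ent_Ioo (Z : Fin k → Ω → S) (i j : Fin k) :
    ent p (fun ω => fun t : {t : Fin k // i < t ∧ t < j} => Z t.val ω)
      = hA p Z (Finset.Ioo i.val j.val) := by
  refine ent_congr fun ω ω' => ?_
  rw [JJ_eq_iff]
  constructor
  · intro h n hn
    rw [Finset.mem_Ioo] at hn
    have hnk : n < k := lt_trans hn.2 j.isLt
    rw [Zo_eq_iff Z n hnk]
    exact congrFun h ⟨⟨n, hnk⟩, ⟨hn.1, hn.2⟩⟩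
  · intro h
    funext t
    have hn : t.val.val ∈ Finset.Ioo i.val j.val := by
      rw [Finset.mem_Ioo]
      exact ⟨t.prop.1, t.prop.2⟩
    have := h t.val.val hn
    rw [Zo_eq_iff Z t.val.val t.val.isLt] at this
    simpa using this

lemma ent_Icc (Z : Fin k → Ω → S) (i j : Fin k) (hij : i < j) :
    ent p (fun ω => ((Z i ω, Z j ω), fun t : {t : Fin k // i < t ∧ t < j} => Z t.val ω))
      = hA p Z (Finset.Icc i.val j.val) := by
  refine ent_congr fun ω ω' => ?_
  rw [JJ_eq_iff]
  simp only [Prod.mk.injEq]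
  constructor
  · rintro ⟨⟨h1, h2⟩, h3⟩ n hn
    rw [Finset.mem_Icc] at hn
    have hnk : n < k := lt_of_le_of_lt hn.2 j.isLt
    rw [Zo_eq_iff Z n hnk]
    rcases eq_or_lt_of_le hn.1 with he | hlt
    · have : (⟨n, hnk⟩ : Fin k) = i := Fin.ext he.symm
      rw [this]; exact h1
    · rcases eq_or_lt_of_le hn.2 with he2 | hlt2
      · have : (⟨n, hnk⟩ : Fin k) = j := Fin.ext he2
        rw [this]; exact h2
      · exact congrFun h3 ⟨⟨n, hnk⟩, ⟨hlt, hlt2⟩⟩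
  · intro h
    have key : ∀ (n : ℕ) (hnk : n < k), i.val ≤ n → n ≤ j.val →
        Z ⟨n, hnk⟩ ω = Z ⟨n, hnk⟩ ω' := by
      intro n hnk h1 h2
      have := h n (Finset.mem_Icc.mpr ⟨h1, h2⟩)
      rwa [Zo_eq_iff Z n hnk] at this
    refine ⟨⟨?_, ?_⟩, ?_⟩
    · have := key i.val i.isLt (le_refl _) (le_of_lt hij)
      simpa using this
    · have := key j.val j.isLt (le_of_lt hij) (le_refl _)
      simpa using this
    · funext t
      have := key t.val.val t.val.isLt (le_of_lt t.prop.1) (le_of_lt t.prop.2)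
      simpa using this

theorem entropy_pairs_conditioned' {Ω S : Type*} [Fintype Ω] {k : ℕ} (hk : 2 ≤ k)
    (p : Ω → ℝ) (hp : IsProbMass p) (Z : Fin k → Ω → S) :
    ((k : ℝ) - 1) * ent p (fun ω => fun i => Z i ω)
      ≤ ∑ q ∈ Finset.univ.filter (fun q : Fin k × Fin k => q.1 < q.2),
          condEnt p (fun ω => (Z q.1 ω, Z q.2 ω))
            (fun ω => fun t : {t : Fin k // q.1 < t ∧ t < q.2} => Z t ω) := by
  classical
  set G : ℕ → ℕ → ℝ := fun a b => hA p Z (Finset.Icc a b) - hA p Z (Finset.Ioo a b) with hG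
  have hterm : ∀ q ∈ Finset.univ.filter (fun q : Fin k × Fin k => q.1 < q.2),
      condEnt p (fun ω => (Z q.1 ω, Z q.2 ω))
        (fun ω => fun t : {t : Fin k // q.1 < t ∧ t < q.2} => Z t ω)
      = G q.1.val q.2.val := by
    intro q hq
    rw [Finset.mem_filter] at hq
    rw [condEnt, ent_Icc Z q.1 q.2 hq.2, ent_Ioo Z q.1 q.2]
  rw [Finset.sum_congr rfl hterm]
  have hre : ∑ q ∈ Finset.univ.filter (fun q : Fin k × Fin k => q.1 < q.2), G q.1.val q.2.val
      = ∑ b ∈ Finset.range k, ∑ a ∈ Finset.range b, G a b := by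
    rw [Finset.sum_filter, Fintype.sum_prod_type]
    simp only [Fin.lt_def]
    have inner : ∀ i : Fin k, ∑ j : Fin k, (if (i:ℕ) < (j:ℕ) then G i j else 0)
        = ∑ b ∈ Finset.range k, if (i:ℕ) < b then G i b else 0 := fun i =>
      Fin.sum_univ_eq_sum_range (fun b => if (i:ℕ) < b then G i b else 0) k
    rw [Finset.sum_congr rfl (fun i _ => inner i),
      Fin.sum_univ_eq_sum_range (fun a => ∑ b ∈ Finset.range k, if a < b then G a b else 0) k,
      Finset.sum_comm]
    refine Finset.sum_congr rfl fun b hb => ?_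
    rw [Finset.mem_range] at hb
    rw [← Finset.sum_filter]
    have : (Finset.range k).filter (fun a => a < b) = Finset.range b := by
      ext n; simp only [Finset.mem_filter, Finset.mem_range]; omega
    rw [this]
  rw [hre, hA_full (by omega) Z]
  have hkey := key hp Z (k-1)
  rw [Nat.sub_add_cancel (by omega : 1 ≤ k)] at hkey
  have : ((k:ℝ) - 1) = ((k-1 : ℕ) : ℝ) := by
    push_cast [Nat.cast_sub (by omega : 1 ≤ k)]
    ring
  rw [this]
  exact hkey
end


/-- For any discrete random variables $Z_1,\dots,Z_k$ ($k\ge 2$),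
$(k-1)H(Z_1,\dots,Z_k) \le \sum_{i<j} H(Z_i,Z_j \mid Z_{(i,j)})$, where
$Z_{(i,j)}$ is the tuple of variables with index strictly between $i$ and $j$. -/
theorem entropy_pairs_conditioned {Ω S : Type*} [Fintype Ω] {k : ℕ} (hk : 2 ≤ k)
    (p : Ω → ℝ) (hp : IsProbMass p) (Z : Fin k → Ω → S) :
    ((k : ℝ) - 1) * ent p (fun ω => fun i => Z i ω)
      ≤ ∑ q ∈ Finset.univ.filter (fun q : Fin k × Fin k => q.1 < q.2),
          condEnt p (fun ω => (Z q.1 ω, Z q.2 ω))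
            (fun ω => fun t : {t : Fin k // q.1 < t ∧ t < q.2} => Z t ω) := by
  classical
  exact entropy_pairs_conditioned' hk p hp Z
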